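/- arXiv:2305.09328 — 2 statements merged into one kernel-verified Lean document; each statement's English description precedes it below -/
import Mathlib

section
/- Let m₃ ∈ ℝ, v₃ > 0 and ω ≥ 0. Then (1/2)·(erf((√ω + m₃)/√(2v₃)) − erf((m₃ − √ω)/√(2v₃))) = (2/√π)·Σ_{n=0}^∞ [(−1)ⁿ/(n!·(2n+1)·(2v₃)^{(2n+1)/2})]·Σ_{k odd, 1≤k≤2n+1} C(2n+1,k)·m₃^{2n+1−k}·ω^{k/2}. -/
open Real Finset

/-- The Gauss error function. -/
noncomputable def erf (z : ℝ) : ℝ :=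
  (2 / Real.sqrt π) * ∫ t in (0:ℝ)..z, Real.exp (-t ^ 2)

lemma exp_neg_sq_hasSum (t : ℝ) :
    HasSum (fun n : ℕ => (-1) ^ n * t ^ (2 * n) / n.factorial) (Real.exp (-t ^ 2)) := by
  have h := NormedSpace.expSeries_div_hasSum_exp (-t ^ 2)
  rw [← Real.exp_eq_exp_ℝ] at h
  convert h using 2 with n
  · rfl
  rw [neg_pow (t ^ 2) n, pow_mul]

lemma erf_term_hasSum (z : ℝ) :
    HasSum (fun n : ℕ => (-1) ^ n * z ^ (2 * n + 1) / (n.factorial * (2 * n + 1)))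
      (∫ t in (0:ℝ)..z, Real.exp (-t ^ 2)) := by
  have h := intervalIntegral.hasSum_integral_of_dominated_convergence
    (F := fun (n : ℕ) (t : ℝ) => (-1) ^ n * t ^ (2 * n) / n.factorial)
    (f := fun t => Real.exp (-t ^ 2)) (μ := MeasureTheory.volume) (a := 0) (b := z)
    (bound := fun n _ => |z| ^ (2 * n) / n.factorial)
    (fun n => (Continuous.aestronglyMeasurable (by fun_prop)))
    ?_ ?_ ?_ ?_
  · convert h using 2 with n
    · rfl
    rw [intervalIntegral.integral_div, intervalIntegral.integral_const_mul,
        integral_pow]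
    have h1 : ((n.factorial : ℝ)) ≠ 0 := by positivity
    have h2 : (2 * (n:ℝ) + 1) ≠ 0 := by positivity
    push_cast
    field_simp
    try ring
    try exact Or.inl trivial
  · intro n
    filter_upwards with t ht
    have htz : |t| ≤ |z| := by
      have h1 : min 0 z ≤ t := le_of_lt ht.1
      have h2 : t ≤ max 0 z := ht.2
      calc |t| ≤ max |min 0 z| |max 0 z| := abs_le_max_abs_abs h1 h2
        _ ≤ |z| := by
          rcases le_total 0 z with h | h <;>
            simp [min_eq_left, min_eq_right, max_eq_left, max_eq_right, h, abs_of_nonneg,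
              abs_of_nonpos]
    have : ‖(-1 : ℝ) ^ n * t ^ (2 * n) / n.factorial‖
        = |t| ^ (2 * n) / n.factorial := by
      rw [norm_div, norm_mul, norm_pow, norm_pow, norm_neg, norm_one, one_pow, one_mul,
        Real.norm_natCast, Real.norm_eq_abs]
    rw [this]
    gcongr
  · filter_upwards with t ht
    have : Summable fun n : ℕ => (|z| ^ 2) ^ n / n.factorial :=
      Real.summable_pow_div_factorial _
    simpa [pow_mul] using this
  · exact intervalIntegrable_const
  · filter_upwards with t ht
    exact exp_neg_sq_hasSum t

lemma odd_binomial (m x : ℝ) (N : ℕ) :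
    (x + m) ^ N - (m - x) ^ N =
      2 * ∑ k ∈ (Finset.range (N + 1)).filter (fun k => Odd k),
        (Nat.choose N k : ℝ) * m ^ (N - k) * x ^ k := by
  have h1 : (x + m) ^ N = ∑ k ∈ Finset.range (N + 1),
      x ^ k * m ^ (N - k) * (Nat.choose N k : ℝ) := add_pow x m N
  have h2 : (m - x) ^ N = ∑ k ∈ Finset.range (N + 1),
      (-x) ^ k * m ^ (N - k) * (Nat.choose N k : ℝ) := by
    rw [show m - x = -x + m by ring, add_pow]
  rw [h1, h2, ← Finset.sum_sub_distrib, Finset.mul_sum, Finset.sum_filter]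
  apply Finset.sum_congr rfl
  intro k _
  rcases Nat.even_or_odd k with he | ho
  · rw [he.neg_pow, if_neg (by simpa using he)]
    ring
  · rw [ho.neg_pow, if_pos ho]
    ring

theorem erf_difference_series (m₃ v₃ ω : ℝ) (hv : 0 < v₃) (hω : 0 ≤ ω) :
    (1 / 2) * (erf ((Real.sqrt ω + m₃) / Real.sqrt (2 * v₃)) -
        erf ((m₃ - Real.sqrt ω) / Real.sqrt (2 * v₃))) =
      (2 / Real.sqrt π) *
        ∑' n : ℕ, ((-1) ^ n / ((n.factorial : ℝ) * (2 * n + 1) *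
            (2 * v₃) ^ (((2 * n + 1 : ℕ) : ℝ) / 2))) *
          ∑ k ∈ (Finset.range (2 * n + 2)).filter (fun k => Odd k),
            (Nat.choose (2 * n + 1) k : ℝ) * m₃ ^ (2 * n + 1 - k) * ω ^ ((k : ℝ) / 2) := by
  have hs : (0:ℝ) < Real.sqrt (2 * v₃) := Real.sqrt_pos.mpr (by linarith)
  set s := Real.sqrt (2 * v₃) with hsdef
  set a := (Real.sqrt ω + m₃) / s
  set b := (m₃ - Real.sqrt ω) / s
  have ha := erf_term_hasSum a
  have hb := erf_term_hasSum b
  have hdiff := ha.sub hb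
  have key : ∀ n : ℕ,
      (1 / 2) * ((-1) ^ n * a ^ (2 * n + 1) / (n.factorial * (2 * n + 1))
        - (-1) ^ n * b ^ (2 * n + 1) / (n.factorial * (2 * n + 1)))
      = ((-1) ^ n / ((n.factorial : ℝ) * (2 * n + 1) *
            (2 * v₃) ^ (((2 * n + 1 : ℕ) : ℝ) / 2))) *
          ∑ k ∈ (Finset.range (2 * n + 2)).filter (fun k => Odd k),
            (Nat.choose (2 * n + 1) k : ℝ) * m₃ ^ (2 * n + 1 - k) * ω ^ ((k : ℝ) / 2) := by
    intro n
    have hspow : s ^ (2 * n + 1) = (2 * v₃) ^ (((2 * n + 1 : ℕ) : ℝ) / 2) := by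
      rw [hsdef, Real.sqrt_eq_rpow,
        ← Real.rpow_natCast ((2*v₃) ^ ((1:ℝ)/2)) (2*n+1), ← Real.rpow_mul (by linarith)]
      congr 1
      push_cast
      ring
    have habd : a ^ (2*n+1) - b ^ (2*n+1)
        = ((Real.sqrt ω + m₃) ^ (2*n+1) - (m₃ - Real.sqrt ω) ^ (2*n+1)) / s ^ (2*n+1) := by
      show ((Real.sqrt ω + m₃)/s) ^ (2*n+1) - ((m₃ - Real.sqrt ω)/s) ^ (2*n+1) = _
      rw [div_pow, div_pow, div_sub_div_same]
    have hbin := odd_binomial m₃ (Real.sqrt ω) (2 * n + 1)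
    have hωk : ∀ k : ℕ, Real.sqrt ω ^ k = ω ^ ((k : ℝ) / 2) := by
      intro k
      rw [Real.sqrt_eq_rpow, ← Real.rpow_natCast (ω ^ ((1:ℝ)/2)) k,
        ← Real.rpow_mul hω]
      ring_nf
    simp only [hωk] at hbin
    have hne : ((n.factorial : ℝ) * (2 * n + 1)) ≠ 0 := by
      positivity
    have hsne : s ^ (2 * n + 1) ≠ 0 := pow_ne_zero _ (ne_of_gt hs)
    have hab2 := habd.trans (by rw [hbin])
    have step : (1:ℝ)/2 * ((-1) ^ n * a ^ (2 * n + 1) / ((n.factorial : ℝ) * (2 * n + 1))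
        - (-1) ^ n * b ^ (2 * n + 1) / ((n.factorial : ℝ) * (2 * n + 1)))
      = (-1) ^ n * (a ^ (2*n+1) - b ^ (2*n+1)) / (2 * ((n.factorial : ℝ) * (2 * n + 1))) := by
      field_simp
    rw [step, hab2, ← hspow]
    field_simp
  rw [show erf a - erf b = (2 / Real.sqrt π) *
      ((∫ t in (0:ℝ)..a, Real.exp (-t ^ 2)) - ∫ t in (0:ℝ)..b, Real.exp (-t ^ 2)) by
    unfold erf; ring]
  rw [← ha.tsum_eq, ← hb.tsum_eq, ← Summable.tsum_sub ha.summable hb.summable,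
      ← tsum_congr key, tsum_mul_left]
  ring
end

section
/- Under the assumptions of the previous outage reformulation with X = h̃² for h̃ ∼ N(m₃, v₃), the outage probability P = ℙ(log₂(1 + SINR) < R_M) equals (1/2)·(erf((√ω + m₃)/√(2v₃)) − erf((m₃ − √ω)/√(2v₃))) where ω = ε_M·ρ²/((α_M² − α_U²·ε_M)·γ). -/
open Real MeasureTheory ProbabilityTheory NNReal

lemma erf_neg (z : ℝ) : erf (-z) = - erf z := by
  have h : ∫ t in (0:ℝ)..(-z), Real.exp (-t ^ 2)
      = - ∫ t in (0:ℝ)..z, Real.exp (-t ^ 2) := by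
    have h1 : ∫ x in z..(0:ℝ), Real.exp (-(-x) ^ 2)
        = ∫ x in (-(0:ℝ))..(-z), Real.exp (-x ^ 2) :=
      intervalIntegral.integral_comp_neg (fun t => Real.exp (-t ^ 2))
    simp only [neg_sq, neg_zero] at h1
    rw [← h1, intervalIntegral.integral_symm]
  simp only [erf, h, mul_neg]

lemma exp_sq_intble (a b : ℝ) :
    IntervalIntegrable (fun t : ℝ => Real.exp (-t ^ 2)) volume a b :=
  (Real.continuous_exp.comp (by continuity)).intervalIntegrable a b

lemma gaussian_Ioo (m : ℝ) (v : ℝ≥0) (hv : 0 < (v : ℝ)) {a b : ℝ} (hab : a ≤ b) :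
    ((gaussianReal m v) (Set.Ioo a b)).toReal
      = (1 / 2) * (erf ((b - m) / Real.sqrt (2 * v)) - erf ((a - m) / Real.sqrt (2 * v))) := by
  have hv' : v ≠ 0 := by
    intro h; rw [h] at hv; simp at hv
  set s := Real.sqrt (2 * (v : ℝ)) with hs
  have hs0 : 0 < s := Real.sqrt_pos.mpr (by positivity)
  have hsq : s ^ 2 = 2 * (v : ℝ) := Real.sq_sqrt (by positivity)
  have hπ : 0 < Real.sqrt π := Real.sqrt_pos.mpr Real.pi_pos
  have hpdf : ∀ x, gaussianPDFReal m v x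
      = (Real.sqrt π * s)⁻¹ * Real.exp (-(x / s - m / s) ^ 2) := by
    intro x
    have h1 : Real.sqrt (2 * π * (v : ℝ)) = Real.sqrt π * s := by
      rw [hs, ← Real.sqrt_mul Real.pi_pos.le]
      ring_nf
    have h2 : (-(x / s - m / s) ^ 2) = -(x - m) ^ 2 / (2 * (v : ℝ)) := by
      rw [← hsq]
      field_simp
    rw [gaussianPDFReal, h1, h2]
  rw [gaussianReal_apply_eq_integral m hv',
    ENNReal.toReal_ofReal (setIntegral_nonneg measurableSet_Ioo
      (fun x _ => gaussianPDFReal_nonneg m v x))]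
  rw [← MeasureTheory.integral_Ioc_eq_integral_Ioo, ← intervalIntegral.integral_of_le hab]
  calc ∫ x in a..b, gaussianPDFReal m v x
      = ∫ x in a..b, (Real.sqrt π * s)⁻¹ * Real.exp (-(x / s - m / s) ^ 2) := by
        simp_rw [hpdf]
    _ = (Real.sqrt π * s)⁻¹ * ∫ x in a..b, Real.exp (-(x / s - m / s) ^ 2) := by
        rw [intervalIntegral.integral_const_mul]
    _ = (Real.sqrt π * s)⁻¹ * (s • ∫ t in (a / s - m / s)..(b / s - m / s),
          Real.exp (-t ^ 2)) := by
        rw [intervalIntegral.integral_comp_div_sub (fun t => Real.exp (-t ^ 2)) hs0.ne' (m / s)]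
    _ = (1 / 2) * (erf ((b - m) / s) - erf ((a - m) / s)) := by
        have hAB : ∀ c : ℝ, c / s - m / s = (c - m) / s := fun c => by ring
        rw [hAB a, hAB b, smul_eq_mul]
        have hsplit : ∫ t in ((a - m) / s)..((b - m) / s), Real.exp (-t ^ 2)
            = (∫ t in (0:ℝ)..((b - m) / s), Real.exp (-t ^ 2))
              - ∫ t in (0:ℝ)..((a - m) / s), Real.exp (-t ^ 2) := by
          rw [← intervalIntegral.integral_interval_sub_left (exp_sq_intble _ _)
            (exp_sq_intble _ _)]
        rw [hsplit, erf, erf]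
        field_simp

theorem co_inac_outage_probability
    {Ω : Type*} [MeasureSpace Ω] [IsProbabilityMeasure (ℙ : Measure Ω)]
    (αM αU γ ρ2 RM εM m₃ : ℝ) (v₃ : ℝ≥0) (hv : 0 < (v₃ : ℝ))
    (hαM : 0 < αM) (hαU : 0 < αU) (hsum : αM ^ 2 + αU ^ 2 = 1)
    (hγ : 0 < γ) (hρ : 0 < ρ2)
    (hεM : εM = 2 ^ RM - 1) (hfeas : αM ^ 2 - αU ^ 2 * εM > 0)
    (htil : Ω → ℝ) (hmeas : Measurable htil)
    (hlaw : Measure.map htil ℙ = gaussianReal m₃ v₃)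
    (ω : ℝ) (hω : ω = εM * ρ2 / ((αM ^ 2 - αU ^ 2 * εM) * γ)) :
    (ℙ {x | Real.logb 2 (1 +
        (αM ^ 2 * (htil x ^ 2) * γ) / (αU ^ 2 * (htil x ^ 2) * γ + ρ2)) < RM}).toReal =
      (1 / 2) * (erf ((Real.sqrt ω + m₃) / Real.sqrt (2 * v₃)) -
        erf ((m₃ - Real.sqrt ω) / Real.sqrt (2 * v₃))) := by
  have hK : 0 < (αM ^ 2 - αU ^ 2 * εM) * γ := mul_pos hfeas hγ
  have hset : {x | Real.logb 2 (1 +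
        (αM ^ 2 * (htil x ^ 2) * γ) / (αU ^ 2 * (htil x ^ 2) * γ + ρ2)) < RM}
      = htil ⁻¹' Set.Ioo (-Real.sqrt ω) (Real.sqrt ω) := by
    ext x
    set X := htil x ^ 2 with hX
    have hX0 : 0 ≤ X := sq_nonneg _
    have hD : 0 < αU ^ 2 * X * γ + ρ2 := by positivity
    have hS0 : 0 ≤ (αM ^ 2 * X * γ) / (αU ^ 2 * X * γ + ρ2) :=
      div_nonneg (by positivity) hD.le
    have h1S : 0 < 1 + (αM ^ 2 * X * γ) / (αU ^ 2 * X * γ + ρ2) := by linarith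
    simp only [Set.mem_setOf_eq, Set.mem_preimage, Set.mem_Ioo]
    rw [Real.logb_lt_iff_lt_rpow one_lt_two h1S]
    have h2R : (2 : ℝ) ^ RM = 1 + εM := by rw [hεM]; ring
    rw [h2R, add_lt_add_iff_left, div_lt_iff₀ hD]
    constructor
    · intro h
      have hXω : X < ω := by
        rw [hω, lt_div_iff₀ hK]
        nlinarith
      have habs : |htil x| < Real.sqrt ω := by
        rw [Real.lt_sqrt (abs_nonneg _), sq_abs]
        exact hXω
      exact abs_lt.mp habs
    · intro ⟨h1, h2⟩
      have habs : |htil x| < Real.sqrt ω := abs_lt.mpr ⟨h1, h2⟩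
      have hXω : X < ω := by
        rw [← sq_abs] at hX
        rw [hX]
        exact (Real.lt_sqrt (abs_nonneg _)).mp habs
      rw [hω, lt_div_iff₀ hK] at hXω
      nlinarith
  rw [hset, ← Measure.map_apply hmeas measurableSet_Ioo, hlaw,
    gaussian_Ioo m₃ v₃ hv (neg_nonpos_of_nonneg (Real.sqrt_nonneg ω) |>.trans
      (Real.sqrt_nonneg ω))]
  have e1 : (-Real.sqrt ω - m₃) / Real.sqrt (2 * v₃)
      = -((Real.sqrt ω + m₃) / Real.sqrt (2 * v₃)) := by ring
  have e2 : (m₃ - Real.sqrt ω) / Real.sqrt (2 * v₃)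
      = -((Real.sqrt ω - m₃) / Real.sqrt (2 * v₃)) := by ring
  rw [e1, erf_neg, e2, erf_neg]
  ring
end
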